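/- Let C be an essentially small triangulated category. The assignments H ↦ f(H) := {A ∈ C : [A] ∈ H} and S ↦ g(S) := the subgroup of K0(C) generated by {[A] : A ∈ S} are mutually inverse bijections between the set of subgroups of K0(C) and the set of dense complete full subcategories of C. -/

import Mathlib

/-!
Grothendieck groups of essentially small triangulated categories.

`K0 C` is the quotient of the free abelian group on the isomorphism classes of objects
of `C` by the subgroup generated by the Euler relations `⟨X⟩ - ⟨Y⟩ + ⟨Z⟩` coming from
distinguished triangles `X ⟶ Y ⟶ Z ⟶ X⟦1⟧`; `K0.mk C A` is the class `[A]`.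
A full subcategory (identified with its set of objects) is *dense* if every object of `C`
is a direct summand of an object of the subcategory, and *complete* if whenever two of
the three objects of a distinguished triangle lie in it, so does the third.
-/

open CategoryTheory CategoryTheory.Limits CategoryTheory.Pretriangulated ZeroObject

universe w v u

namespace TriK0

variable (C : Type u) [Category.{v} C] [HasZeroObject C] [Preadditive C] [HasShift C ℤ]
  [∀ n : ℤ, (shiftFunctor C n).Additive] [Pretriangulated C]

/-- The isomorphism class of an object. -/
def isoCl (A : C) : Quotient (isIsomorphicSetoid C) := Quotient.mk (isIsomorphicSetoid C) A

/-- The subgroup of Euler relations coming from distinguished triangles. -/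
def K0Rels : AddSubgroup (FreeAbelianGroup (Quotient (isIsomorphicSetoid C))) :=
  AddSubgroup.closure
    { x | ∃ T : Triangle C, T ∈ (distTriang C) ∧
        x = FreeAbelianGroup.of (isoCl C T.obj₁) - FreeAbelianGroup.of (isoCl C T.obj₂)
          + FreeAbelianGroup.of (isoCl C T.obj₃) }

/-- The Grothendieck group of the triangulated category `C`. -/
def K0 : Type u := FreeAbelianGroup (Quotient (isIsomorphicSetoid C)) ⧸ K0Rels C

noncomputable instance : AddCommGroup (K0 C) :=
  QuotientAddGroup.Quotient.addCommGroup _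

/-- The class `[A]` of an object `A` in the Grothendieck group. -/
def K0.mk (A : C) : K0 C := QuotientAddGroup.mk (FreeAbelianGroup.of (isoCl C A))

/-- A full subcategory is dense if every object of `C` is a direct summand of an object
of the subcategory. -/
noncomputable def DenseSub (S : Set C) : Prop :=
  ∀ A : C, ∃ X ∈ S, ∃ A' : C, Nonempty (X ≅ A ⊞ A')

/-- A full subcategory is complete if, in any distinguished triangle, whenever two of the
three objects belong to the subcategory, so does the third. -/
def CompleteSub (S : Set C) : Prop :=
  ∀ T ∈ (distTriang C),
    (T.obj₁ ∈ S → T.obj₂ ∈ S → T.obj₃ ∈ S) ∧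
    (T.obj₁ ∈ S → T.obj₃ ∈ S → T.obj₂ ∈ S) ∧
    (T.obj₂ ∈ S → T.obj₃ ∈ S → T.obj₁ ∈ S)

end TriK0

open TriK0

namespace TriK0Proof

variable {C : Type u} [Category.{v} C] [HasZeroObject C] [Preadditive C] [HasShift C ℤ]
  [∀ n : ℤ, (shiftFunctor C n).Additive] [Pretriangulated C]

/-! ### Basic facts about `K0` -/

lemma mk_eq_of_iso {A B : C} (e : A ≅ B) : K0.mk C A = K0.mk C B := by
  have : isoCl C A = isoCl C B := Quotient.sound ⟨e⟩
  simp only [K0.mk, this]; rfl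

lemma euler {T : Triangle C} (hT : T ∈ distTriang C) :
    K0.mk C T.obj₁ - K0.mk C T.obj₂ + K0.mk C T.obj₃ = 0 := by
  have h : (FreeAbelianGroup.of (isoCl C T.obj₁) - FreeAbelianGroup.of (isoCl C T.obj₂)
      + FreeAbelianGroup.of (isoCl C T.obj₃)) ∈ K0Rels C :=
    AddSubgroup.subset_closure ⟨T, hT, rfl⟩
  exact (QuotientAddGroup.eq_zero_iff _).2 h

lemma mk_zero : K0.mk C (0 : C) = 0 := by
  have h := euler (contractible_distinguished (0 : C))
  simpa using h

lemma mk_shift (A : C) : K0.mk C (A⟦(1 : ℤ)⟧) = - K0.mk C A := by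
  have h := euler (rot_of_distTriang _ (contractible_distinguished A))
  simp only [Triangle.rotate, contractibleTriangle, Triangle.mk] at h
  rw [mk_zero] at h
  exact eq_neg_of_add_eq_zero_right (by simpa using h)

lemma mk_biprod (A B : C) : K0.mk C (A ⊞ B) = K0.mk C A + K0.mk C B := by
  have h := euler (binaryBiproductTriangle_distinguished A B)
  simp only [binaryBiproductTriangle, Triangle.mk] at h
  rw [sub_add_eq_add_sub, sub_eq_zero] at h
  exact h.symm

lemma mk_surjective : Function.Surjective (K0.mk C) := by
  intro x
  refine QuotientAddGroup.induction_on x ?_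
  intro y
  refine FreeAbelianGroup.induction_on y ?_ ?_ ?_ ?_
  · exact ⟨0, (mk_zero (C := C)).trans rfl⟩
  · intro a
    obtain ⟨A, rfl⟩ := Quotient.exists_rep a
    exact ⟨A, rfl⟩
  · rintro a ⟨A, hA⟩
    refine ⟨A⟦(1 : ℤ)⟧, ?_⟩
    rw [mk_shift, hA]
    simp
    rfl
  · rintro a b ⟨A, hA⟩ ⟨B, hB⟩
    refine ⟨A ⊞ B, ?_⟩
    rw [mk_biprod, hA, hB]
    simp
    rfl

/-! ### Closure properties of dense complete subcategories -/

variable {S : Set C}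

lemma zero_mem (hd : DenseSub C S) (hc : CompleteSub C S) : (0 : C) ∈ S := by
  obtain ⟨X, hX, -⟩ := hd 0
  exact (hc _ (contractible_distinguished X)).1 hX hX

lemma iso_mem (hc : CompleteSub C S) (h0 : (0 : C) ∈ S) {A B : C} (e : A ≅ B)
    (hA : A ∈ S) : B ∈ S := by
  have hT : Triangle.mk e.hom (0 : B ⟶ (0 : C)) (0 : (0 : C) ⟶ A⟦(1 : ℤ)⟧) ∈ distTriang C := by
    refine isomorphic_distinguished _ (contractible_distinguished A) _ ?_
    exact Triangle.isoMk _ _ (Iso.refl _) e.symm (Iso.refl _) (e.hom_inv_id.trans (Category.comp_id _).symm) (zero_comp.trans comp_zero.symm) (zero_comp.trans comp_zero.symm)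
  exact (hc _ hT).2.1 hA h0

lemma shift_mem (hc : CompleteSub C S) (h0 : (0 : C) ∈ S) {A : C} (hA : A ∈ S) :
    A⟦(1 : ℤ)⟧ ∈ S :=
  (hc _ (rot_of_distTriang _ (contractible_distinguished A))).1 hA h0

lemma biprod_mem (hc : CompleteSub C S) {A B : C} (hA : A ∈ S) (hB : B ∈ S) :
    (A ⊞ B) ∈ S :=
  (hc _ (binaryBiproductTriangle_distinguished A B)).2.1 hA hB

lemma summand_mem (hc : CompleteSub C S) {A B : C} (hA : A ∈ S) (hAB : (A ⊞ B) ∈ S) :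
    B ∈ S :=
  (hc _ (binaryBiproductTriangle_distinguished A B)).1 hA hAB

/-! ### Binary sums of distinguished triangles -/

/-- A product over `Bool` is a binary biproduct. -/
noncomputable def prodBoolIso (X : Bool → C) [HasProduct X] :
    (∏ᶜ X) ≅ X true ⊞ X false where
  hom := biprod.lift (Pi.π X true) (Pi.π X false)
  inv := Pi.lift (fun b => Bool.rec (biprod.snd) (biprod.fst) b)
  hom_inv_id := by
    apply Pi.hom_ext
    rintro (_ | _) <;> simp
  inv_hom_id := by
    apply biprod.hom_ext <;> simp

lemma exists_sum_triangle (T₁ T₂ : Triangle C) (h₁ : T₁ ∈ distTriang C)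
    (h₂ : T₂ ∈ distTriang C) :
    ∃ T ∈ distTriang C, Nonempty (T.obj₁ ≅ T₁.obj₁ ⊞ T₂.obj₁) ∧
      Nonempty (T.obj₂ ≅ T₁.obj₂ ⊞ T₂.obj₂) ∧ Nonempty (T.obj₃ ≅ T₁.obj₃ ⊞ T₂.obj₃) := by
  let F : Bool → Triangle C := fun b => bif b then T₁ else T₂
  have hF : ∀ b, F b ∈ distTriang C := by rintro (_ | _) <;> [exact h₂; exact h₁]
  exact ⟨productTriangle F, productTriangle_distinguished F hF,
    ⟨prodBoolIso _⟩, ⟨prodBoolIso _⟩, ⟨prodBoolIso _⟩⟩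

/-! ### Biproduct shuffling isomorphisms -/

/-- Swap the last two factors. -/
noncomputable def swap23 (p q r : C) : (p ⊞ q) ⊞ r ≅ (p ⊞ r) ⊞ q :=
  biprod.associator p q r ≪≫ biprod.mapIso (Iso.refl p) (biprod.braiding q r) ≪≫
    (biprod.associator p r q).symm

/-- Middle four interchange. -/
noncomputable def interchange (p q r t : C) : (p ⊞ q) ⊞ (r ⊞ t) ≅ (p ⊞ r) ⊞ (q ⊞ t) :=
  biprod.associator p q (r ⊞ t) ≪≫
    biprod.mapIso (Iso.refl p) ((biprod.associator q r t).symm ≪≫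
      biprod.mapIso (biprod.braiding q r) (Iso.refl t) ≪≫ biprod.associator r q t) ≪≫
    (biprod.associator p r (q ⊞ t)).symm

/-- Remove a zero right factor. -/
noncomputable def elimZeroR {Z : C} (hZ : IsZero Z) (A : C) : A ⊞ Z ≅ A :=
  (isoBiprodZero hZ).symm

/-- Remove a zero left factor. -/
noncomputable def elimZeroL {Z : C} (hZ : IsZero Z) (A : C) : Z ⊞ A ≅ A :=
  (isoZeroBiprod hZ).symm

lemma isZero_shift_zero (n : ℤ) : IsZero ((0 : C)⟦n⟧) :=
  (isZero_zero C).of_iso ((shiftFunctor C n).mapZeroObject)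

/-! ### `A ⊞ A⟦1⟧` belongs to every dense complete subcategory -/

lemma sumShift_mem (hd : DenseSub C S) (hc : CompleteSub C S) (A : C) :
    (A ⊞ A⟦(1 : ℤ)⟧) ∈ S := by
  have h0 : (0 : C) ∈ S := zero_mem hd hc
  obtain ⟨X, hX, A', ⟨e⟩⟩ := hd A
  -- triangle (A, 0, A⟦1⟧)
  have hU₁ := rot_of_distTriang _ (contractible_distinguished A)
  -- triangle (0⟦-1⟧, A, A)
  have hU₂ := inv_rot_of_distTriang _ (contractible_distinguished A)
  obtain ⟨V, hV, ⟨e1⟩, ⟨e2⟩, ⟨e3⟩⟩ := exists_sum_triangle _ _ hU₁ hU₂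
  obtain ⟨W, hW, ⟨f1⟩, ⟨f2⟩, ⟨f3⟩⟩ := exists_sum_triangle _ _ hV (contractible_distinguished A')
  -- W.obj₁ ≅ (A ⊞ 0⟦-1⟧) ⊞ A' ≅ A ⊞ A' ≅ X
  have i1 : W.obj₁ ≅ A ⊞ A' :=
    f1 ≪≫ biprod.mapIso (e1 ≪≫ elimZeroR (isZero_shift_zero _) A) (Iso.refl A')
  have hW1 : W.obj₁ ∈ S := iso_mem hc h0 (e ≪≫ i1.symm) hX
  -- W.obj₂ ≅ (0 ⊞ A) ⊞ A' ≅ A ⊞ A' ≅ X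
  have i2 : W.obj₂ ≅ A ⊞ A' :=
    f2 ≪≫ biprod.mapIso (e2 ≪≫ elimZeroL (isZero_zero C) A) (Iso.refl A')
  have hW2 : W.obj₂ ∈ S := iso_mem hc h0 (e ≪≫ i2.symm) hX
  have hW3 : W.obj₃ ∈ S := (hc _ hW).1 hW1 hW2
  -- W.obj₃ ≅ (A⟦1⟧ ⊞ A) ⊞ 0 ≅ A⟦1⟧ ⊞ A ≅ A ⊞ A⟦1⟧
  have i3 : W.obj₃ ≅ A ⊞ A⟦(1 : ℤ)⟧ :=
    f3 ≪≫ elimZeroR (isZero_zero C) _ ≪≫ e3 ≪≫ biprod.braiding _ _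
  exact iso_mem hc h0 i3 hW3

/-! ### The Thomason relation and group -/

/-- `A ∼ B` iff `A ⊞ U ≅ B ⊞ V` for some `U V ∈ S`. -/
def QRel (S : Set C) : C → C → Prop :=
  fun A B => ∃ U ∈ S, ∃ V ∈ S, Nonempty ((A ⊞ U) ≅ (B ⊞ V))

lemma qrel_of_iso (h0 : (0 : C) ∈ S) {A B : C} (e : A ≅ B) : QRel S A B :=
  ⟨0, h0, 0, h0, ⟨biprod.mapIso e (Iso.refl _)⟩⟩

lemma qrel_refl (h0 : (0 : C) ∈ S) (A : C) : QRel S A A := qrel_of_iso h0 (Iso.refl A)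

lemma qrel_symm {A B : C} (h : QRel S A B) : QRel S B A := by
  obtain ⟨U, hU, V, hV, ⟨w⟩⟩ := h
  exact ⟨V, hV, U, hU, ⟨w.symm⟩⟩

lemma qrel_trans (hc : CompleteSub C S) {A B D : C} (h₁ : QRel S A B) (h₂ : QRel S B D) :
    QRel S A D := by
  obtain ⟨U, hU, V, hV, ⟨w⟩⟩ := h₁
  obtain ⟨U', hU', V', hV', ⟨w'⟩⟩ := h₂
  refine ⟨U ⊞ U', biprod_mem hc hU hU', V' ⊞ V, biprod_mem hc hV' hV, ⟨?_⟩⟩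
  calc A ⊞ (U ⊞ U') ≅ (A ⊞ U) ⊞ U' := (biprod.associator _ _ _).symm
    _ ≅ (B ⊞ V) ⊞ U' := biprod.mapIso w (Iso.refl _)
    _ ≅ (B ⊞ U') ⊞ V := swap23 _ _ _
    _ ≅ (D ⊞ V') ⊞ V := biprod.mapIso w' (Iso.refl _)
    _ ≅ D ⊞ (V' ⊞ V) := biprod.associator _ _ _

lemma qrel_equivalence (hd : DenseSub C S) (hc : CompleteSub C S) :
    Equivalence (QRel S) :=
  ⟨qrel_refl (zero_mem hd hc), qrel_symm, qrel_trans hc⟩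

lemma qrel_zero_of_mem (h0 : (0 : C) ∈ S) {A : C} (hA : A ∈ S) : QRel S A 0 :=
  ⟨0, h0, A, hA, ⟨biprod.braiding A 0⟩⟩

lemma mem_of_qrel_zero (hc : CompleteSub C S) (h0 : (0 : C) ∈ S) {A : C}
    (h : QRel S A 0) : A ∈ S := by
  obtain ⟨U, hU, V, hV, ⟨w⟩⟩ := h
  have h1 : ((0 : C) ⊞ V) ∈ S := iso_mem hc h0 (isoZeroBiprod (isZero_zero C)) hV
  have h2 : (A ⊞ U) ∈ S := iso_mem hc h0 w.symm h1
  have h3 : (U ⊞ A) ∈ S := iso_mem hc h0 (biprod.braiding A U) h2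
  exact summand_mem hc hU h3

lemma qrel_add_left (hc : CompleteSub C S) {B₁ B₂ : C} (A : C) (h : QRel S B₁ B₂) :
    QRel S (A ⊞ B₁) (A ⊞ B₂) := by
  obtain ⟨U, hU, V, hV, ⟨w⟩⟩ := h
  refine ⟨U, hU, V, hV, ⟨?_⟩⟩
  calc (A ⊞ B₁) ⊞ U ≅ A ⊞ (B₁ ⊞ U) := biprod.associator _ _ _
    _ ≅ A ⊞ (B₂ ⊞ V) := biprod.mapIso (Iso.refl _) w
    _ ≅ (A ⊞ B₂) ⊞ V := (biprod.associator _ _ _).symm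

lemma qrel_add_right (hc : CompleteSub C S) {A₁ A₂ : C} (B : C) (h : QRel S A₁ A₂) :
    QRel S (A₁ ⊞ B) (A₂ ⊞ B) := by
  obtain ⟨U, hU, V, hV, ⟨w⟩⟩ := h
  refine ⟨U, hU, V, hV, ⟨?_⟩⟩
  calc (A₁ ⊞ B) ⊞ U ≅ (A₁ ⊞ U) ⊞ B := swap23 _ _ _
    _ ≅ (A₂ ⊞ V) ⊞ B := biprod.mapIso w (Iso.refl _)
    _ ≅ (A₂ ⊞ B) ⊞ V := swap23 _ _ _

lemma qrel_shift (hc : CompleteSub C S) (h0 : (0 : C) ∈ S) {A B : C} (h : QRel S A B) :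
    QRel S (A⟦(1 : ℤ)⟧) (B⟦(1 : ℤ)⟧) := by
  haveI : PreservesBinaryBiproducts (shiftFunctor C (1 : ℤ)) :=
    preservesBinaryBiproducts_of_preservesBiproducts _
  obtain ⟨U, hU, V, hV, ⟨w⟩⟩ := h
  refine ⟨U⟦(1 : ℤ)⟧, shift_mem hc h0 hU, V⟦(1 : ℤ)⟧, shift_mem hc h0 hV, ⟨?_⟩⟩
  calc A⟦(1 : ℤ)⟧ ⊞ U⟦(1 : ℤ)⟧ ≅ (A ⊞ U)⟦(1 : ℤ)⟧ :=
        ((shiftFunctor C (1 : ℤ)).mapBiprod A U).symm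
    _ ≅ (B ⊞ V)⟦(1 : ℤ)⟧ := (shiftFunctor C (1 : ℤ)).mapIso w
    _ ≅ B⟦(1 : ℤ)⟧ ⊞ V⟦(1 : ℤ)⟧ := (shiftFunctor C (1 : ℤ)).mapBiprod B V

/-- The key compatibility: for any distinguished triangle `(X, Y, Z)`,
`X ⊞ Z ∼ Y` modulo `S`. -/
lemma qrel_euler (hd : DenseSub C S) (hc : CompleteSub C S) {T : Triangle C}
    (hT : T ∈ distTriang C) : QRel S (T.obj₁ ⊞ T.obj₃) T.obj₂ := by
  have h0 : (0 : C) ∈ S := zero_mem hd hc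
  obtain ⟨WX, hWX, X', ⟨eX⟩⟩ := hd T.obj₁
  obtain ⟨WZ, hWZ, Z', ⟨eZ⟩⟩ := hd T.obj₃
  obtain ⟨V, hV, ⟨e1⟩, ⟨e2⟩, ⟨e3⟩⟩ :=
    exists_sum_triangle T _ hT (contractible_distinguished X')
  obtain ⟨W, hW, ⟨f1⟩, ⟨f2⟩, ⟨f3⟩⟩ :=
    exists_sum_triangle V _ hV (inv_rot_of_distTriang _ (contractible_distinguished Z'))
  -- `W.obj₁ ≅ (T₁ ⊞ X') ⊞ 0⟦-1⟧ ≅ WX ∈ S`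
  have i1 : W.obj₁ ≅ T.obj₁ ⊞ X' := f1 ≪≫ elimZeroR (isZero_shift_zero _) _ ≪≫ e1
  have hW1 : W.obj₁ ∈ S := iso_mem hc h0 (eX ≪≫ i1.symm) hWX
  -- `W.obj₃ ≅ (T₃ ⊞ 0) ⊞ Z' ≅ WZ ∈ S`
  have i3 : W.obj₃ ≅ T.obj₃ ⊞ Z' :=
    f3 ≪≫ biprod.mapIso (e3 ≪≫ elimZeroR (isZero_zero C) _) (Iso.refl Z')
  have hW3 : W.obj₃ ∈ S := iso_mem hc h0 (eZ ≪≫ i3.symm) hWZ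
  -- hence the middle object of `W` is in `S`
  have hW2 : W.obj₂ ∈ S := (hc _ hW).2.1 hW1 hW3
  have i2 : W.obj₂ ≅ (T.obj₂ ⊞ X') ⊞ Z' := f2 ≪≫ biprod.mapIso e2 (Iso.refl Z')
  refine ⟨W.obj₂, hW2, WX ⊞ WZ, biprod_mem hc hWX hWZ, ⟨?_⟩⟩
  calc (T.obj₁ ⊞ T.obj₃) ⊞ W.obj₂
      ≅ (T.obj₁ ⊞ T.obj₃) ⊞ ((T.obj₂ ⊞ X') ⊞ Z') := biprod.mapIso (Iso.refl _) i2
    _ ≅ (T.obj₁ ⊞ T.obj₃) ⊞ (T.obj₂ ⊞ (X' ⊞ Z')) :=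
        biprod.mapIso (Iso.refl _) (biprod.associator _ _ _)
    _ ≅ (T.obj₂ ⊞ (X' ⊞ Z')) ⊞ (T.obj₁ ⊞ T.obj₃) := biprod.braiding _ _
    _ ≅ T.obj₂ ⊞ ((X' ⊞ Z') ⊞ (T.obj₁ ⊞ T.obj₃)) := biprod.associator _ _ _
    _ ≅ T.obj₂ ⊞ ((X' ⊞ T.obj₁) ⊞ (Z' ⊞ T.obj₃)) :=
        biprod.mapIso (Iso.refl _) (interchange _ _ _ _)
    _ ≅ T.obj₂ ⊞ ((T.obj₁ ⊞ X') ⊞ (T.obj₃ ⊞ Z')) :=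
        biprod.mapIso (Iso.refl _) (biprod.mapIso (biprod.braiding _ _) (biprod.braiding _ _))
    _ ≅ T.obj₂ ⊞ (WX ⊞ WZ) :=
        biprod.mapIso (Iso.refl _) (biprod.mapIso eX.symm eZ.symm)

/-! ### The Thomason group and the key lemma -/

/-- The abelian group structure on `Quot (QRel S)`. -/
noncomputable def qAddCommGroup (S : Set C) (hd : DenseSub C S) (hc : CompleteSub C S) :
    AddCommGroup (Quot (QRel S)) := by
  have h0 : (0 : C) ∈ S := zero_mem hd hc
  letI : Zero (Quot (QRel S)) := ⟨Quot.mk _ 0⟩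
  letI : Add (Quot (QRel S)) := ⟨Quot.map₂ (fun A B => A ⊞ B)
      (fun A B₁ B₂ h => qrel_add_left hc A h)
      (fun A₁ A₂ B h => qrel_add_right hc B h)⟩
  letI : Neg (Quot (QRel S)) :=
    ⟨Quot.map (fun A => A⟦(1 : ℤ)⟧) (fun _ _ h => qrel_shift hc h0 h)⟩
  exact
  { add := (· + ·)
    zero := 0
    neg := (- ·)
    nsmul := nsmulRec
    zsmul := zsmulRec
    add_assoc := fun x y z =>
      Quot.inductionOn x fun a => Quot.inductionOn y fun b => Quot.inductionOn z fun c =>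
        Quot.sound (qrel_of_iso h0 (biprod.associator a b c))
    zero_add := fun x => Quot.inductionOn x fun a =>
      Quot.sound (qrel_of_iso h0 (elimZeroL (isZero_zero C) a))
    add_zero := fun x => Quot.inductionOn x fun a =>
      Quot.sound (qrel_of_iso h0 (elimZeroR (isZero_zero C) a))
    add_comm := fun x y => Quot.inductionOn x fun a => Quot.inductionOn y fun b =>
      Quot.sound (qrel_of_iso h0 (biprod.braiding a b))
    neg_add_cancel := fun x => Quot.inductionOn x fun a =>
      Quot.sound (qrel_zero_of_mem h0
        (iso_mem hc h0 (biprod.braiding _ _) (sumShift_mem hd hc a))) }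

/-- The key lemma: if `[A]` lies in the subgroup generated by the classes of objects of a
dense complete subcategory `S`, then `A ∈ S`. -/
lemma mem_of_mk_mem_closure (S : Set C) (hd : DenseSub C S) (hc : CompleteSub C S)
    {A : C} (hA : K0.mk C A ∈ AddSubgroup.closure (K0.mk C '' S)) : A ∈ S := by
  have h0 : (0 : C) ∈ S := zero_mem hd hc
  letI : AddCommGroup (Quot (QRel S)) := qAddCommGroup S hd hc
  let q : Quotient (isIsomorphicSetoid C) → Quot (QRel S) :=
    Quotient.lift (fun B => Quot.mk _ B)
      (fun a b h => Quot.sound (qrel_of_iso h0 h.some))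
  let φ₀ : FreeAbelianGroup (Quotient (isIsomorphicSetoid C)) →+ Quot (QRel S) :=
    FreeAbelianGroup.lift q
  have hq : ∀ B : C, φ₀ (FreeAbelianGroup.of (isoCl C B)) = Quot.mk (QRel S) B := by
    intro B
    simp only [φ₀, FreeAbelianGroup.lift_apply_of]
    rfl
  have hker : K0Rels C ≤ φ₀.ker := by
    rw [K0Rels, AddSubgroup.closure_le]
    rintro x ⟨T, hT, rfl⟩
    have hsum : Quot.mk (QRel S) T.obj₁ + Quot.mk (QRel S) T.obj₃
        = Quot.mk (QRel S) T.obj₂ := Quot.sound (qrel_euler hd hc hT)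
    show φ₀ _ = 0
    rw [map_add, map_sub, hq, hq, hq, sub_add_eq_add_sub, hsum, sub_self]
  let φ : K0 C →+ Quot (QRel S) := QuotientAddGroup.lift (K0Rels C) φ₀ hker
  have hφmk : ∀ B : C, φ (K0.mk C B) = Quot.mk (QRel S) B := fun B => hq B
  have hle : AddSubgroup.closure (K0.mk C '' S) ≤ φ.ker := by
    rw [AddSubgroup.closure_le]
    rintro x ⟨B, hB, rfl⟩
    show φ (K0.mk C B) = 0
    rw [hφmk]
    exact Quot.sound (qrel_zero_of_mem h0 hB)
  have h1 : φ (K0.mk C A) = 0 := hle hA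
  rw [hφmk] at h1
  have h2 : Quot.mk (QRel S) A = Quot.mk (QRel S) (0 : C) := h1
  have h3 : QRel S A 0 :=
    ((qrel_equivalence hd hc).eqvGen_iff).1 (Quot.eq.1 h2)
  exact mem_of_qrel_zero hc h0 h3

end TriK0Proof

open TriK0Proof

/-- Thomason's classification: `H ↦ f(H) = {A | [A] ∈ H}` and
`S ↦ g(S) = ⟨[A] : A ∈ S⟩` are mutually inverse bijections between subgroups of
`K₀(C)` and dense complete full subcategories of `C`. -/
theorem classification_of_dense_complete_subcategories
    (C : Type u) [Category.{v} C] [HasZeroObject C] [Preadditive C] [HasShift C ℤ]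
    [∀ n : ℤ, (shiftFunctor C n).Additive] [Pretriangulated C] [EssentiallySmall.{w} C] :
    (∀ H : AddSubgroup (K0 C),
      DenseSub C {A : C | K0.mk C A ∈ H} ∧ CompleteSub C {A : C | K0.mk C A ∈ H} ∧
      AddSubgroup.closure (K0.mk C '' {A : C | K0.mk C A ∈ H}) = H) ∧
    (∀ S : Set C, DenseSub C S → CompleteSub C S →
      {A : C | K0.mk C A ∈ AddSubgroup.closure (K0.mk C '' S)} = S) := by
  constructor
  · intro H
    refine ⟨?_, ?_, ?_⟩
    · -- density of `f(H)`
      intro A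
      refine ⟨A ⊞ A⟦(1 : ℤ)⟧, ?_, A⟦(1 : ℤ)⟧, ⟨Iso.refl _⟩⟩
      show K0.mk C (A ⊞ A⟦(1 : ℤ)⟧) ∈ H
      rw [mk_biprod, mk_shift, add_neg_cancel]
      exact H.zero_mem
    · -- completeness of `f(H)`
      intro T hT
      have h := euler hT
      rw [sub_add_eq_add_sub, sub_eq_zero] at h
      refine ⟨?_, ?_, ?_⟩
      · intro h1 h2
        show K0.mk C T.obj₃ ∈ H
        have : K0.mk C T.obj₃ = K0.mk C T.obj₂ - K0.mk C T.obj₁ := by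
          rw [eq_sub_iff_add_eq, add_comm]
          exact h
        rw [this]
        exact H.sub_mem h2 h1
      · intro h1 h3
        show K0.mk C T.obj₂ ∈ H
        rw [← h]
        exact H.add_mem h1 h3
      · intro h2 h3
        show K0.mk C T.obj₁ ∈ H
        have : K0.mk C T.obj₁ = K0.mk C T.obj₂ - K0.mk C T.obj₃ := by
          rw [eq_sub_iff_add_eq]
          exact h
        rw [this]
        exact H.sub_mem h2 h3
    · -- `g (f H) = H`
      apply le_antisymm
      · rw [AddSubgroup.closure_le]
        rintro x ⟨A, hA, rfl⟩
        exact hA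
      · intro h hh
        obtain ⟨A, rfl⟩ := mk_surjective h
        exact AddSubgroup.subset_closure ⟨A, hh, rfl⟩
  · -- `f (g S) = S`
    intro S hd hc
    ext A
    simp only [Set.mem_setOf_eq]
    constructor
    · exact fun h => mem_of_mk_mem_closure S hd hc h
    · intro hA
      exact AddSubgroup.subset_closure ⟨A, hA, rfl⟩
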